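/- Suppose l(k) is not identically zero as a polynomial in k. Then the ℂ-linear map P : ℂ[[x]]^N → ℂ[[x]]^N has finite-dimensional kernel and cokernel over ℂ, and its index equals nN, i.e. χ(P; ℂ[[x]]^N) = dim ker P − dim coker P = N·max_{0≤i≤m}(i − ν(A_i)). -/

import Mathlib

open Polynomial PowerSeries

noncomputable section

/-- ν(A): minimum over the entries of a polynomial matrix of the order of vanishing
at `x = 0` (`⊤` for the zero matrix), as a natural number via `toNat`. -/
def matNu {N : ℕ} (A : Matrix (Fin N) (Fin N) (Polynomial ℂ)) : ℕ :=
  (⨅ i, ⨅ j, (A i j).trailingDegree).toNat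

/-- The coefficient matrix `A^{ν(A)}` of `x^{ν(A)}` in `A`. -/
def trailMat {N : ℕ} (A : Matrix (Fin N) (Fin N) (Polynomial ℂ)) : Matrix (Fin N) (Fin N) ℂ :=
  fun i j => (A i j).coeff (matNu A)

open Classical in
/-- The matrix `L(k) = Σ_{j ∈ J} k(k-1)⋯(k-j+1) A_j^{n_j}`, where
`J = {j : A_j ≠ 0 ∧ j - ν(A_j) = n}`. -/
def Lmat {N m : ℕ} (A : Fin (m + 1) → Matrix (Fin N) (Fin N) (Polynomial ℂ)) (n : ℤ)
    (k : ℂ) : Matrix (Fin N) (Fin N) ℂ :=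
  ∑ j : Fin (m + 1),
    if A j ≠ 0 ∧ (j : ℤ) - matNu (A j) = n then
      (∏ t ∈ Finset.range (j : ℕ), (k - t)) • trailMat (A j)
    else 0

/-- The differential operator `P = Σ_{i=0}^m A_i(x) (d/dx)^i` acting ℂ-linearly on
`ℂ[[x]]^N`. -/
def Pop {N m : ℕ} (A : Fin (m + 1) → Matrix (Fin N) (Fin N) (Polynomial ℂ)) :
    Module.End ℂ (Fin N → PowerSeries ℂ) :=
  ∑ i : Fin (m + 1),
    LinearMap.pi fun b : Fin N =>
      ∑ c : Fin N,
        (LinearMap.mulLeft ℂ ((A i b c : Polynomial ℂ) : PowerSeries ℂ) ∘ₗ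
            (((PowerSeries.derivative ℂ).toLinearMap : Module.End ℂ (PowerSeries ℂ)) ^ (i : ℕ))) ∘ₗ
          LinearMap.proj c

/-- A formal power series is convergent if it has positive radius of convergence. -/
def PSConvergent (f : PowerSeries ℂ) : Prop :=
  ∃ r : ℝ, 0 < r ∧ Summable fun j : ℕ => ‖PowerSeries.coeff j f‖ * r ^ j

end
noncomputable section AuxIndex

open Finset

lemma coeff_derivative_pow (f : PowerSeries ℂ) (i q : ℕ) :
    PowerSeries.coeff q
      ((((PowerSeries.derivative ℂ).toLinearMap : Module.End ℂ (PowerSeries ℂ)) ^ i) f)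
      = (q + i).descFactorial i * PowerSeries.coeff (q + i) f := by
  induction i generalizing f with
  | zero => simp
  | succ i ih =>
    rw [pow_succ, Module.End.mul_apply, ih, Derivation.coeFn_coe, PowerSeries.coeff_derivative]
    have h1 : q + (i + 1) = q + i + 1 := by ring
    rw [h1, Nat.succ_descFactorial_succ]
    push_cast
    ring

lemma descFactorial_cast_prod (k i : ℕ) (h : i ≤ k) :
    ((k.descFactorial i : ℂ)) = ∏ t ∈ Finset.range i, ((k : ℂ) - t) := by
  rw [Nat.descFactorial_eq_prod_range]
  push_cast
  apply Finset.prod_congr rfl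
  intro t ht
  have ht' : t ≤ k := le_of_lt (lt_of_lt_of_le (Finset.mem_range.mp ht) h)
  push_cast [ht']
  ring

lemma Pop_apply_coeff {N m : ℕ} (A : Fin (m + 1) → Matrix (Fin N) (Fin N) (Polynomial ℂ))
    (u : Fin N → PowerSeries ℂ) (b : Fin N) (r : ℕ) :
    PowerSeries.coeff r (Pop A u b)
      = ∑ i : Fin (m + 1), ∑ c : Fin N, ∑ s ∈ Finset.range (r + 1),
          (A i b c).coeff s *
            ((r - s + i).descFactorial i * PowerSeries.coeff (r - s + i) (u c)) := by
  rw [Pop]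
  rw [LinearMap.sum_apply]
  simp only [Pi.smul_apply, Finset.sum_apply, LinearMap.pi_apply, LinearMap.sum_apply,
    LinearMap.comp_apply, LinearMap.proj_apply, LinearMap.mulLeft_apply, map_sum]
  refine Finset.sum_congr rfl fun i _ => Finset.sum_congr rfl fun c _ => ?_
  rw [PowerSeries.coeff_mul, Finset.Nat.sum_antidiagonal_eq_sum_range_succ_mk]
  refine Finset.sum_congr rfl fun s hs => ?_
  rw [coeff_derivative_pow, Polynomial.coeff_coe]

def coeffEquiv (N : ℕ) : (Fin N → PowerSeries ℂ) ≃ₗ[ℂ] (ℕ → Fin N → ℂ) where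
  toFun u := fun k b => PowerSeries.coeff k (u b)
  invFun v := fun b => PowerSeries.mk fun k => v k b
  map_add' u v := by funext k b; simp
  map_smul' c u := by funext k b; simp
  left_inv u := by funext b; ext k; simp
  right_inv v := by funext k b; simp

def Tmap {N m : ℕ} (A : Fin (m + 1) → Matrix (Fin N) (Fin N) (Polynomial ℂ)) :
    (ℕ → Fin N → ℂ) →ₗ[ℂ] (ℕ → Fin N → ℂ) :=
  ((coeffEquiv N).toLinearMap ∘ₗ (Pop A)) ∘ₗ (coeffEquiv N).symm.toLinearMap

lemma Tmap_apply {N m : ℕ} (A : Fin (m + 1) → Matrix (Fin N) (Fin N) (Polynomial ℂ))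
    (v : ℕ → Fin N → ℂ) (r : ℕ) (b : Fin N) :
    Tmap A v r b = ∑ i : Fin (m + 1), ∑ c : Fin N, ∑ s ∈ Finset.range (r + 1),
      (A i b c).coeff s * ((r - s + i).descFactorial i * v (r - s + i) c) := by
  show PowerSeries.coeff r (Pop A ((coeffEquiv N).symm v) b) = _
  rw [Pop_apply_coeff]
  simp [coeffEquiv]

lemma coeff_entry_eq_zero {N : ℕ} (B : Matrix (Fin N) (Fin N) (Polynomial ℂ))
    (b c : Fin N) {s : ℕ} (hs : s < matNu B) : (B b c).coeff s = 0 := by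
  by_cases htop : (⨅ i, ⨅ j, (B i j).trailingDegree) = ⊤
  · simp [matNu, htop] at hs
  · apply Polynomial.coeff_eq_zero_of_lt_trailingDegree
    have h1 : ((matNu B : ℕ∞)) = ⨅ i, ⨅ j, (B i j).trailingDegree := by
      rw [matNu]; exact ENat.coe_toNat htop
    calc (s : ℕ∞) < (matNu B : ℕ∞) := by exact_mod_cast hs
      _ = _ := h1
      _ ≤ (B b c).trailingDegree := iInf_le_of_le b (iInf_le _ c)

lemma Tmap_congr {N m : ℕ} (A : Fin (m + 1) → Matrix (Fin N) (Fin N) (Polynomial ℂ))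
    (n : ℤ) (hn_ub : ∀ i, A i ≠ 0 → (i : ℤ) - matNu (A i) ≤ n)
    (v w : ℕ → Fin N → ℂ) (r : ℕ)
    (h : ∀ j : ℕ, (j : ℤ) ≤ (r : ℤ) + n → v j = w j) : Tmap A v r = Tmap A w r := by
  funext b
  rw [Tmap_apply, Tmap_apply]
  refine Finset.sum_congr rfl fun i _ => Finset.sum_congr rfl fun c _ =>
    Finset.sum_congr rfl fun s hs => ?_
  by_cases hA : A i = 0
  · have : A i b c = 0 := by rw [hA]; rfl
    simp [this]
  · by_cases hcoef : (A i b c).coeff s = 0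
    · rw [hcoef]; ring
    · have hs' : matNu (A i) ≤ s := by
        by_contra hlt
        exact hcoef (coeff_entry_eq_zero (A i) b c (not_le.mp hlt))
      have hsr : s ≤ r := by
        have := Finset.mem_range.mp hs; omega
      have hub := hn_ub i hA
      have hi : (i : ℤ) ≤ (m : ℤ) := by exact_mod_cast (Fin.is_le i)
      have hj : ((r - s + (i : ℕ) : ℕ) : ℤ) ≤ (r : ℤ) + n := by
        push_cast [hsr]
        have hs'' : (matNu (A i) : ℤ) ≤ (s : ℤ) := by exact_mod_cast hs'
        omega
      rw [h _ hj]
def singleF {N : ℕ} (k : ℕ) (x : Fin N → ℂ) : ℕ → Fin N → ℂ :=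
  fun j => if j = k then x else 0

def truncF {N : ℕ} (v : ℕ → Fin N → ℂ) (k : ℕ) : ℕ → Fin N → ℂ :=
  fun j => if j < k then v j else 0

lemma Tmap_singleF {N m : ℕ} (A : Fin (m + 1) → Matrix (Fin N) (Fin N) (Polynomial ℂ))
    (n : ℤ) (hn_ub : ∀ i, A i ≠ 0 → (i : ℤ) - matNu (A i) ≤ n)
    (k r : ℕ) (hk : (k : ℤ) = (r : ℤ) + n) (hkm : m ≤ k) (x : Fin N → ℂ) :
    Tmap A (singleF k x) r = (Lmat A n k).mulVec x := by
  classical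
  funext b
  rw [Tmap_apply]
  have hRHS : (Lmat A n k).mulVec x b
      = ∑ i : Fin (m + 1), ∑ c : Fin N,
          (if A i ≠ 0 ∧ (i : ℤ) - matNu (A i) = n then
            (∏ t ∈ Finset.range (i : ℕ), ((k : ℂ) - t)) * (trailMat (A i) b c * x c)
          else 0) := by
    simp only [Matrix.mulVec, dotProduct, Lmat, Matrix.sum_apply, Finset.sum_mul]
    rw [Finset.sum_comm]
    refine Finset.sum_congr rfl fun j _ => Finset.sum_congr rfl fun c _ => ?_
    rw [apply_ite (fun M : Matrix (Fin N) (Fin N) ℂ => M b c)]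
    by_cases hcond : A j ≠ 0 ∧ (j : ℤ) - matNu (A j) = n
    · rw [if_pos hcond, if_pos hcond, Matrix.smul_apply, smul_eq_mul, mul_assoc]
    · rw [if_neg hcond, if_neg hcond, Matrix.zero_apply, zero_mul]
  rw [hRHS]
  refine Finset.sum_congr rfl fun i _ => Finset.sum_congr rfl fun c _ => ?_
  have him : (i : ℕ) ≤ m := Fin.is_le i
  have hik : (i : ℕ) ≤ k := le_trans him hkm
  by_cases hA : A i = 0
  · have hz : A i b c = 0 := by rw [hA]; rfl
    rw [if_neg (by simp [hA])]
    exact Finset.sum_eq_zero fun s _ => by simp [hz]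
  · have hub := hn_ub i hA
    by_cases hJ : (i : ℤ) - matNu (A i) = n
    · -- diagonal term
      rw [if_pos ⟨hA, hJ⟩]
      set s0 := matNu (A i) with hs0
      have hs0eq : (s0 : ℤ) = (i : ℤ) - n := by omega
      have hs0r : s0 ≤ r := by
        have : (s0 : ℤ) ≤ (r : ℤ) := by
          have hik' : (i : ℤ) ≤ (k : ℤ) := by exact_mod_cast hik
          omega
        exact_mod_cast this
      have hkey : r - s0 + (i : ℕ) = k := by
        have : ((r - s0 + (i : ℕ) : ℕ) : ℤ) = (k : ℤ) := by
          push_cast [hs0r]; omega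
        exact_mod_cast this
      rw [Finset.sum_eq_single_of_mem s0 (Finset.mem_range.mpr (by omega))]
      · rw [hkey]
        rw [show singleF k x k c = x c from by simp [singleF]]
        rw [descFactorial_cast_prod k i hik]
        show trailMat (A i) b c * _ = _
        ring
      · intro s hs hne
        have hsr : s ≤ r := by have := Finset.mem_range.mp hs; omega
        have : ¬ (r - s + (i : ℕ) = k) := by
          intro hcontra
          apply hne
          have : ((r - s + (i : ℕ) : ℕ) : ℤ) = (k : ℤ) := by exact_mod_cast hcontra
          have hs'' : (s : ℤ) = (s0 : ℤ) := by push_cast [hsr] at this; omega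
          exact_mod_cast hs''
        rw [show singleF k x (r - s + (i : ℕ)) c = 0 from by simp [singleF, this]]
        ring
    · -- off-diagonal i : every term vanishes
      rw [if_neg (by tauto)]
      refine Finset.sum_eq_zero fun s hs => ?_
      have hsr : s ≤ r := by have := Finset.mem_range.mp hs; omega
      by_cases hcond : r - s + (i : ℕ) = k
      · have hs' : (s : ℤ) = (i : ℤ) - n := by
          have : ((r - s + (i : ℕ) : ℕ) : ℤ) = (k : ℤ) := by exact_mod_cast hcond
          push_cast [hsr] at this; omega
        have hslt : s < matNu (A i) := by
          have : (s : ℤ) < (matNu (A i) : ℤ) := by omega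
          exact_mod_cast this
        rw [coeff_entry_eq_zero (A i) b c hslt, zero_mul]
      · rw [show singleF k x (r - s + (i : ℕ)) c = 0 from by simp [singleF, hcond]]
        ring
lemma truncF_succ {N : ℕ} (v : ℕ → Fin N → ℂ) (k : ℕ) :
    truncF v (k + 1) = truncF v k + singleF k (v k) := by
  funext j
  simp only [truncF, singleF, Pi.add_apply]
  by_cases h : j = k
  · subst h; simp
  · by_cases h2 : j < k
    · rw [if_pos (by omega), if_pos h2, if_neg h]; simp
    · rw [if_neg (by omega), if_neg h2, if_neg h]; simp

lemma Tmap_split {N m : ℕ} (A : Fin (m + 1) → Matrix (Fin N) (Fin N) (Polynomial ℂ))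
    (n : ℤ) (hn_ub : ∀ i, A i ≠ 0 → (i : ℤ) - matNu (A i) ≤ n)
    (k0 r0 : ℕ) (hr0 : (r0 : ℤ) = (k0 : ℤ) - n) (hk0m : m ≤ k0)
    (v : ℕ → Fin N → ℂ) (r : ℕ) (hr : r0 ≤ r) :
    Tmap A v r = Tmap A (truncF v (r - r0 + k0)) r
      + (Lmat A n ((r - r0 + k0 : ℕ) : ℂ)).mulVec (v (r - r0 + k0)) := by
  set k := r - r0 + k0 with hkdef
  have hkZ : (k : ℤ) = (r : ℤ) + n := by
    have : (k : ℤ) = (r : ℤ) - r0 + k0 := by push_cast [hkdef, hr]; omega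
    omega
  have h1 : Tmap A v r = Tmap A (truncF v (k + 1)) r := by
    apply Tmap_congr A n hn_ub
    intro j hj
    have hjk : j ≤ k := by
      have : (j : ℤ) ≤ (k : ℤ) := by omega
      exact_mod_cast this
    simp [truncF, Nat.lt_succ_of_le hjk]
  rw [h1, truncF_succ, map_add, Pi.add_apply]
  congr 1
  exact Tmap_singleF A n hn_ub k r hkZ (by omega) (v k)

lemma Tmap_lowvanish {N m : ℕ} (A : Fin (m + 1) → Matrix (Fin N) (Fin N) (Polynomial ℂ))
    (n : ℤ) (hn_ub : ∀ i, A i ≠ 0 → (i : ℤ) - matNu (A i) ≤ n)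
    (k0 r0 : ℕ) (hr0 : (r0 : ℤ) = (k0 : ℤ) - n)
    (v : ℕ → Fin N → ℂ) (hv : ∀ j < k0, v j = 0) (r : ℕ) (hr : r < r0) :
    Tmap A v r = 0 := by
  have h1 : Tmap A v r = Tmap A 0 r := by
    apply Tmap_congr A n hn_ub
    intro j hj
    have hjk : j < k0 := by
      have : (j : ℤ) < (k0 : ℤ) := by omega
      exact_mod_cast this
    rw [hv j hjk]; rfl
  rw [h1, map_zero]; rfl

lemma mulVec_cancel {N : ℕ} {M : Matrix (Fin N) (Fin N) ℂ} (h : IsUnit M.det)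
    {x : Fin N → ℂ} (hx : M.mulVec x = 0) : x = 0 := by
  have : M⁻¹.mulVec (M.mulVec x) = x := by
    rw [Matrix.mulVec_mulVec, Matrix.nonsing_inv_mul _ h, Matrix.one_mulVec]
  rw [← this, hx, Matrix.mulVec_zero]

lemma Tmap_inj {N m : ℕ} (A : Fin (m + 1) → Matrix (Fin N) (Fin N) (Polynomial ℂ))
    (n : ℤ) (hn_ub : ∀ i, A i ≠ 0 → (i : ℤ) - matNu (A i) ≤ n)
    (k0 r0 : ℕ) (hr0 : (r0 : ℤ) = (k0 : ℤ) - n) (hk0m : m ≤ k0)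
    (hdet : ∀ k : ℕ, k0 ≤ k → IsUnit (Lmat A n k).det)
    (v : ℕ → Fin N → ℂ) (hv : ∀ j < k0, v j = 0) (hTv : Tmap A v = 0) : v = 0 := by
  have hall : ∀ k, v k = 0 := by
    intro k
    induction k using Nat.strong_induction_on with
    | _ k ih =>
      by_cases hk : k < k0
      · exact hv k hk
      · push_neg at hk
        set r := k - k0 + r0 with hrdef
        have hr : r0 ≤ r := by omega
        have hkr : r - r0 + k0 = k := by omega
        have hsplit := Tmap_split A n hn_ub k0 r0 hr0 hk0m v r hr
        rw [hkr] at hsplit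
        have htr : truncF v k = 0 := by
          funext j; simp only [truncF]
          split
          · exact ih j (by omega)
          · rfl
        rw [htr, map_zero, hTv] at hsplit
        have hz : (Lmat A n k).mulVec (v k) = 0 := by
          have := hsplit.symm
          simpa using this
        exact mulVec_cancel (hdet k hk) hz
  funext k; simpa using hall k
def stepF {N m : ℕ} (A : Fin (m + 1) → Matrix (Fin N) (Fin N) (Polynomial ℂ)) (n : ℤ)
    (k0 r0 : ℕ) (w : ℕ → Fin N → ℂ) (k : ℕ) (p : ℕ → Fin N → ℂ) : Fin N → ℂ :=
  if k0 ≤ k then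
    (Lmat A n k)⁻¹.mulVec (w (k - k0 + r0) - Tmap A (truncF p k) (k - k0 + r0))
  else 0

def seqF {N m : ℕ} (A : Fin (m + 1) → Matrix (Fin N) (Fin N) (Polynomial ℂ)) (n : ℤ)
    (k0 r0 : ℕ) (w : ℕ → Fin N → ℂ) : ℕ → (ℕ → Fin N → ℂ)
  | 0 => 0
  | k + 1 => Function.update (seqF A n k0 r0 w k) k (stepF A n k0 r0 w k (seqF A n k0 r0 w k))

def solF {N m : ℕ} (A : Fin (m + 1) → Matrix (Fin N) (Fin N) (Polynomial ℂ)) (n : ℤ)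
    (k0 r0 : ℕ) (w : ℕ → Fin N → ℂ) : ℕ → Fin N → ℂ :=
  fun k => seqF A n k0 r0 w (k + 1) k

lemma seqF_eq_truncF {N m : ℕ} (A : Fin (m + 1) → Matrix (Fin N) (Fin N) (Polynomial ℂ))
    (n : ℤ) (k0 r0 : ℕ) (w : ℕ → Fin N → ℂ) (k : ℕ) :
    seqF A n k0 r0 w k = truncF (solF A n k0 r0 w) k := by
  induction k with
  | zero => funext j; simp [seqF, truncF]
  | succ k ih =>
    funext j
    by_cases hj : j = k
    · subst hj
      show Function.update (seqF A n k0 r0 w j) j _ j = _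
      rw [Function.update_self]
      have : truncF (solF A n k0 r0 w) (j + 1) j = solF A n k0 r0 w j := by
        simp [truncF]
      rw [this]
      show _ = seqF A n k0 r0 w (j + 1) j
      show _ = Function.update (seqF A n k0 r0 w j) j _ j
      rw [Function.update_self]
    · show Function.update (seqF A n k0 r0 w k) k _ j = _
      rw [Function.update_of_ne hj, ih]
      simp only [truncF]
      by_cases h2 : j < k
      · rw [if_pos h2, if_pos (by omega)]
      · rw [if_neg h2, if_neg (by omega)]

lemma solF_spec {N m : ℕ} (A : Fin (m + 1) → Matrix (Fin N) (Fin N) (Polynomial ℂ))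
    (n : ℤ) (k0 r0 : ℕ) (w : ℕ → Fin N → ℂ) (k : ℕ) :
    solF A n k0 r0 w k = stepF A n k0 r0 w k (truncF (solF A n k0 r0 w) k) := by
  show Function.update (seqF A n k0 r0 w k) k _ k = _
  rw [Function.update_self, seqF_eq_truncF]

lemma solF_low {N m : ℕ} (A : Fin (m + 1) → Matrix (Fin N) (Fin N) (Polynomial ℂ))
    (n : ℤ) (k0 r0 : ℕ) (w : ℕ → Fin N → ℂ) (k : ℕ) (hk : k < k0) :
    solF A n k0 r0 w k = 0 := by
  rw [solF_spec, stepF, if_neg (by omega)]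

lemma truncF_idem {N : ℕ} (v : ℕ → Fin N → ℂ) (k : ℕ) :
    truncF (truncF v k) k = truncF v k := by
  funext j
  simp only [truncF]
  by_cases h : j < k
  · simp [h]
  · simp [h]

lemma Tmap_solF {N m : ℕ} (A : Fin (m + 1) → Matrix (Fin N) (Fin N) (Polynomial ℂ))
    (n : ℤ) (hn_ub : ∀ i, A i ≠ 0 → (i : ℤ) - matNu (A i) ≤ n)
    (k0 r0 : ℕ) (hr0 : (r0 : ℤ) = (k0 : ℤ) - n) (hk0m : m ≤ k0)
    (hdet : ∀ k : ℕ, k0 ≤ k → IsUnit (Lmat A n k).det)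
    (w : ℕ → Fin N → ℂ) (hw : ∀ r < r0, w r = 0) :
    Tmap A (solF A n k0 r0 w) = w := by
  funext r
  by_cases hr : r < r0
  · rw [Tmap_lowvanish A n hn_ub k0 r0 hr0 _ (fun j hj => solF_low A n k0 r0 w j hj) r hr,
      hw r hr]
  · push_neg at hr
    set k := r - r0 + k0 with hkdef
    have hk : k0 ≤ k := by omega
    have hrk : k - k0 + r0 = r := by omega
    have hsplit := Tmap_split A n hn_ub k0 r0 hr0 hk0m (solF A n k0 r0 w) r hr
    have hspec := solF_spec A n k0 r0 w k
    rw [stepF, if_pos hk, hrk, truncF_idem] at hspec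
    rw [hsplit, hspec, Matrix.mulVec_mulVec, Matrix.mul_nonsing_inv _ (hdet k hk),
      Matrix.one_mulVec]
    abel
open Classical in
lemma exists_k0 {N m : ℕ} (A : Fin (m + 1) → Matrix (Fin N) (Fin N) (Polynomial ℂ)) (n : ℤ)
    (hl : ∃ k : ℂ, (Lmat A n k).det ≠ 0) :
    ∃ k0 : ℕ, m ≤ k0 ∧ n ≤ (k0 : ℤ) ∧ ∀ k : ℕ, k0 ≤ k → IsUnit (Lmat A n (k : ℂ)).det := by
  classical
  set LP : Matrix (Fin N) (Fin N) (Polynomial ℂ) :=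
    ∑ j : Fin (m + 1),
      if A j ≠ 0 ∧ (j : ℤ) - matNu (A j) = n then
        (∏ t ∈ Finset.range (j : ℕ), (Polynomial.X - Polynomial.C (t : ℂ))) •
          (trailMat (A j)).map Polynomial.C
      else 0 with hLP
  have heval : ∀ k : ℂ, Polynomial.eval k LP.det = (Lmat A n k).det := by
    intro k
    have h1 : (Polynomial.evalRingHom k) LP.det = (LP.map (Polynomial.evalRingHom k)).det :=
      RingHom.map_det _ _
    have h2 : LP.map (Polynomial.evalRingHom k) = Lmat A n k := by
      ext b c
      simp only [Matrix.map_apply, hLP, Lmat, Matrix.sum_apply, map_sum]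
      refine Finset.sum_congr rfl fun j _ => ?_
      rw [apply_ite (fun M : Matrix (Fin N) (Fin N) (Polynomial ℂ) => M b c),
        apply_ite (Polynomial.evalRingHom k),
        apply_ite (fun M : Matrix (Fin N) (Fin N) ℂ => M b c)]
      by_cases hcond : A j ≠ 0 ∧ (j : ℤ) - matNu (A j) = n <;>
        simp [hcond, Matrix.smul_apply, smul_eq_mul, Polynomial.eval_prod,
          Matrix.map_apply]
    rw [show Polynomial.eval k LP.det = (Polynomial.evalRingHom k) LP.det from rfl, h1, h2]
  obtain ⟨kc, hkc⟩ := hl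
  have hp : LP.det ≠ 0 := by
    intro h0
    apply hkc
    rw [← heval kc, h0, Polynomial.eval_zero]
  have hfin : Set.Finite {x : ℂ | LP.det.IsRoot x} := Polynomial.finite_setOf_isRoot hp
  have hfinN : Set.Finite {k : ℕ | LP.det.IsRoot (k : ℂ)} := by
    have : {k : ℕ | LP.det.IsRoot (k : ℂ)} = (Nat.cast : ℕ → ℂ) ⁻¹' {x : ℂ | LP.det.IsRoot x} :=
      rfl
    rw [this]
    exact Set.Finite.preimage (Set.injOn_of_injective Nat.cast_injective) hfin
  obtain ⟨k1, hk1⟩ := hfinN.bddAbove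
  refine ⟨max (max m n.toNat) (k1 + 1), le_trans (le_max_left _ _) (le_max_left _ _), ?_, ?_⟩
  · have : n.toNat ≤ max (max m n.toNat) (k1 + 1) :=
      le_trans (le_max_right _ _) (le_max_left _ _)
    omega
  · intro k hk
    rw [isUnit_iff_ne_zero, ← heval k]
    intro hroot
    have : k ∈ {k : ℕ | LP.det.IsRoot (k : ℂ)} := hroot
    have := hk1 this
    omega
lemma Tmap_index {N m : ℕ} (A : Fin (m + 1) → Matrix (Fin N) (Fin N) (Polynomial ℂ))
    (n : ℤ) (hn_ub : ∀ i, A i ≠ 0 → (i : ℤ) - matNu (A i) ≤ n)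
    (k0 r0 : ℕ) (hr0 : (r0 : ℤ) = (k0 : ℤ) - n) (hk0m : m ≤ k0)
    (hdet : ∀ k : ℕ, k0 ≤ k → IsUnit (Lmat A n (k : ℂ)).det) :
    FiniteDimensional ℂ (LinearMap.ker (Tmap A)) ∧
      FiniteDimensional ℂ ((ℕ → Fin N → ℂ) ⧸ LinearMap.range (Tmap A)) ∧
      (Module.finrank ℂ (LinearMap.ker (Tmap A)) : ℤ) -
          Module.finrank ℂ ((ℕ → Fin N → ℂ) ⧸ LinearMap.range (Tmap A)) =
        ((k0 : ℤ) - r0) * N := by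
  classical
  -- the head/tail decomposition maps
  let ι : (Fin k0 → Fin N → ℂ) →ₗ[ℂ] (ℕ → Fin N → ℂ) :=
    { toFun := fun f j => if h : j < k0 then f ⟨j, h⟩ else 0
      map_add' := by intro f g; funext j; by_cases h : j < k0 <;> simp [h]
      map_smul' := by intro c f; funext j; by_cases h : j < k0 <;> simp [h] }
  let ι' : (Fin r0 → Fin N → ℂ) →ₗ[ℂ] (ℕ → Fin N → ℂ) :=
    { toFun := fun f j => if h : j < r0 then f ⟨j, h⟩ else 0
      map_add' := by intro f g; funext j; by_cases h : j < r0 <;> simp [h]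
      map_smul' := by intro c f; funext j; by_cases h : j < r0 <;> simp [h] }
  let head : (ℕ → Fin N → ℂ) →ₗ[ℂ] (Fin k0 → Fin N → ℂ) :=
    LinearMap.pi fun j : Fin k0 => LinearMap.proj (j : ℕ)
  let πG : (ℕ → Fin N → ℂ) →ₗ[ℂ] (Fin r0 → Fin N → ℂ) :=
    LinearMap.pi fun j : Fin r0 => LinearMap.proj (j : ℕ)
  let a : (Fin k0 → Fin N → ℂ) →ₗ[ℂ] (Fin r0 → Fin N → ℂ) := (πG ∘ₗ Tmap A) ∘ₗ ι
  have hιlow : ∀ (f : Fin k0 → Fin N → ℂ) (j : ℕ) (hj : j < k0), ι f j = f ⟨j, hj⟩ := by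
    intro f j hj; show dite _ _ _ = _; rw [dif_pos hj]
  have hι'low : ∀ (g : Fin r0 → Fin N → ℂ) (j : ℕ) (hj : j < r0), ι' g j = g ⟨j, hj⟩ := by
    intro g j hj; show dite _ _ _ = _; rw [dif_pos hj]
  have hπGι' : ∀ g : Fin r0 → Fin N → ℂ, πG (ι' g) = g := by
    intro g; funext j; show ι' g (j : ℕ) = g j
    rw [hι'low g j j.isLt]
  -- the submodules V₂ and W₂
  set V₂ : Submodule ℂ (ℕ → Fin N → ℂ) := LinearMap.ker head with hV₂def
  set W₂ : Submodule ℂ (ℕ → Fin N → ℂ) := LinearMap.ker πG with hW₂def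
  have hV₂ : ∀ v : ℕ → Fin N → ℂ, v ∈ V₂ ↔ ∀ j < k0, v j = 0 := by
    intro v
    constructor
    · intro hv j hj
      exact congrFun (LinearMap.mem_ker.mp hv) ⟨j, hj⟩
    · intro h
      rw [LinearMap.mem_ker]
      funext j
      exact h (j : ℕ) j.isLt
  have hW₂ : ∀ w : ℕ → Fin N → ℂ, w ∈ W₂ ↔ ∀ r < r0, w r = 0 := by
    intro w
    constructor
    · intro hw r hr
      exact congrFun (LinearMap.mem_ker.mp hw) ⟨r, hr⟩
    · intro h
      rw [LinearMap.mem_ker]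
      funext r
      exact h (r : ℕ) r.isLt
  -- T restricts to a bijection V₂ → W₂
  have hpres : ∀ v ∈ V₂, Tmap A v ∈ W₂ := by
    intro v hv
    rw [hW₂]
    intro r hr
    exact Tmap_lowvanish A n hn_ub k0 r0 hr0 v ((hV₂ v).mp hv) r hr
  let T₂ : V₂ →ₗ[ℂ] W₂ := (Tmap A).restrict hpres
  have hT₂val : ∀ x : V₂, (T₂ x : ℕ → Fin N → ℂ) = Tmap A (x : ℕ → Fin N → ℂ) := fun x => rfl
  have hT₂inj : Function.Injective T₂ := by
    intro x y hxy
    have hsub : T₂ (x - y) = 0 := by rw [map_sub, hxy, sub_self]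
    have hv : Tmap A ((x - y : V₂) : ℕ → Fin N → ℂ) = 0 := by
      have := congrArg (Subtype.val) hsub
      simpa [hT₂val] using this
    have hz : ((x - y : V₂) : ℕ → Fin N → ℂ) = 0 :=
      Tmap_inj A n hn_ub k0 r0 hr0 hk0m hdet _ ((hV₂ _).mp (x - y).2) hv
    have : x - y = 0 := Subtype.ext hz
    rwa [sub_eq_zero] at this
  have hT₂surj : Function.Surjective T₂ := by
    rintro ⟨w, hw⟩
    refine ⟨⟨solF A n k0 r0 w, (hV₂ _).mpr fun j hj => solF_low A n k0 r0 w j hj⟩, ?_⟩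
    apply Subtype.ext
    show Tmap A (solF A n k0 r0 w) = w
    exact Tmap_solF A n hn_ub k0 r0 hr0 hk0m hdet w ((hW₂ w).mp hw)
  let Teq : V₂ ≃ₗ[ℂ] W₂ := LinearEquiv.ofBijective T₂ ⟨hT₂inj, hT₂surj⟩
  -- the complement of ι (head v)
  have hcompl : ∀ v : ℕ → Fin N → ℂ, v - ι (head v) ∈ V₂ := by
    intro v
    rw [hV₂]
    intro j hj
    have : ι (head v) j = v j := by rw [hιlow _ j hj]; rfl
    show v j - ι (head v) j = 0
    rw [this, sub_self]
  have hW₂range : ∀ w : ℕ → Fin N → ℂ, w ∈ W₂ → w ∈ LinearMap.range (Tmap A) := by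
    intro w hw
    obtain ⟨v, hv⟩ := hT₂surj ⟨w, hw⟩
    exact ⟨(v : ℕ → Fin N → ℂ), congrArg Subtype.val hv⟩
  -- a (head v) in terms of Tmap
  have hahead : ∀ v : ℕ → Fin N → ℂ, a (head v) = πG (Tmap A v) := by
    intro v
    show πG (Tmap A (ι (head v))) = πG (Tmap A v)
    have h1 : ι (head v) = v - (v - ι (head v)) := by ring
    rw [h1, map_sub, map_sub]
    have h2 : πG (Tmap A (v - ι (head v))) = 0 :=
      LinearMap.mem_ker.mp (hpres _ (hcompl v))
    rw [h2, sub_zero]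
  -- KERNEL
  let φ : LinearMap.ker (Tmap A) →ₗ[ℂ] LinearMap.ker a :=
    (head ∘ₗ (LinearMap.ker (Tmap A)).subtype).codRestrict (LinearMap.ker a)
      (by
        rintro ⟨v, hv⟩
        show head v ∈ LinearMap.ker a
        rw [LinearMap.mem_ker, hahead, LinearMap.mem_ker.mp hv, map_zero])
  have hφval : ∀ x : LinearMap.ker (Tmap A), (φ x : Fin k0 → Fin N → ℂ) = head (x : ℕ → Fin N → ℂ) :=
    fun x => rfl
  have hφinj : Function.Injective φ := by
    intro x y hxy
    have hsub : φ (x - y) = 0 := by rw [map_sub, hxy, sub_self]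
    have hh : head ((x - y : LinearMap.ker (Tmap A)) : ℕ → Fin N → ℂ) = 0 := by
      have := congrArg Subtype.val hsub
      simpa [hφval] using this
    have hmem : ((x - y : LinearMap.ker (Tmap A)) : ℕ → Fin N → ℂ) ∈ V₂ := LinearMap.mem_ker.mpr hh
    have hz : ((x - y : LinearMap.ker (Tmap A)) : ℕ → Fin N → ℂ) = 0 :=
      Tmap_inj A n hn_ub k0 r0 hr0 hk0m hdet _ ((hV₂ _).mp hmem)
        (LinearMap.mem_ker.mp (x - y).2)
    have : x - y = 0 := Subtype.ext hz
    rwa [sub_eq_zero] at this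
  have hφsurj : Function.Surjective φ := by
    rintro ⟨f, hf⟩
    have hwmem : Tmap A (ι f) ∈ W₂ := LinearMap.mem_ker.mpr (LinearMap.mem_ker.mp hf)
    set v₂ : V₂ := Teq.symm ⟨Tmap A (ι f), hwmem⟩ with hv₂def
    have hv₂ : Tmap A (v₂ : ℕ → Fin N → ℂ) = Tmap A (ι f) := by
      have h0 : Teq v₂ = ⟨Tmap A (ι f), hwmem⟩ := by
        rw [hv₂def]; exact Teq.apply_symm_apply _
      have h1 : ((Teq v₂ : W₂) : ℕ → Fin N → ℂ) = Tmap A (v₂ : ℕ → Fin N → ℂ) := rfl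
      exact h1.symm.trans (congrArg Subtype.val h0)
    refine ⟨⟨ι f - (v₂ : ℕ → Fin N → ℂ), ?_⟩, ?_⟩
    · rw [LinearMap.mem_ker, map_sub, hv₂, sub_self]
    · apply Subtype.ext
      show head (ι f - (v₂ : ℕ → Fin N → ℂ)) = f
      rw [map_sub]
      have h1 : head (ι f) = f := by
        funext j
        show ι f (j : ℕ) = f j
        rw [hιlow f j j.isLt]
      have h2 : head (v₂ : ℕ → Fin N → ℂ) = 0 := LinearMap.mem_ker.mp v₂.2
      rw [h1, h2, sub_zero]
  have e_ker : LinearMap.ker (Tmap A) ≃ₗ[ℂ] LinearMap.ker a :=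
    LinearEquiv.ofBijective φ ⟨hφinj, hφsurj⟩
  -- COKERNEL
  let q : (ℕ → Fin N → ℂ) →ₗ[ℂ] (ℕ → Fin N → ℂ) ⧸ LinearMap.range (Tmap A) := (LinearMap.range (Tmap A)).mkQ
  let ψ : (Fin r0 → Fin N → ℂ) →ₗ[ℂ] (ℕ → Fin N → ℂ) ⧸ LinearMap.range (Tmap A) := q ∘ₗ ι'
  have hψsurj : Function.Surjective ψ := by
    intro y
    obtain ⟨w, rfl⟩ := Submodule.mkQ_surjective _ y
    refine ⟨πG w, ?_⟩
    have hw₂ : w - ι' (πG w) ∈ W₂ := by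
      rw [hW₂]
      intro r hr
      have : ι' (πG w) r = w r := by rw [hι'low _ r hr]; rfl
      show w r - ι' (πG w) r = 0
      rw [this, sub_self]
    have hmem : w - ι' (πG w) ∈ LinearMap.range (Tmap A) := hW₂range _ hw₂
    show q (ι' (πG w)) = Submodule.mkQ _ w
    have : q (w - ι' (πG w)) = 0 := (Submodule.Quotient.mk_eq_zero _).mpr hmem
    rw [map_sub] at this
    have := sub_eq_zero.mp this
    exact this.symm
  have hψker : LinearMap.ker ψ = LinearMap.range a := by
    ext g
    constructor
    · intro hg
      have hmem : ι' g ∈ LinearMap.range (Tmap A) := by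
        have := LinearMap.mem_ker.mp hg
        exact (Submodule.Quotient.mk_eq_zero _).mp this
      obtain ⟨v, hv⟩ := hmem
      refine ⟨head v, ?_⟩
      rw [hahead, hv, hπGι']
    · rintro ⟨f, rfl⟩
      rw [LinearMap.mem_ker]
      show q (ι' (a f)) = 0
      rw [Submodule.mkQ_apply, Submodule.Quotient.mk_eq_zero]
      have hw₂ : Tmap A (ι f) - ι' (a f) ∈ W₂ := by
        rw [hW₂]
        intro r hr
        have h1 : ι' (a f) r = a f ⟨r, hr⟩ := hι'low _ r hr
        have h2 : a f ⟨r, hr⟩ = Tmap A (ι f) r := rfl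
        show Tmap A (ι f) r - ι' (a f) r = 0
        rw [h1, h2, sub_self]
      have hm := hW₂range _ hw₂
      have : ι' (a f) = Tmap A (ι f) - (Tmap A (ι f) - ι' (a f)) := by ring
      rw [this]
      exact Submodule.sub_mem _ ⟨ι f, rfl⟩ hm
  -- assemble dimensions
  have e_cok : ((Fin r0 → Fin N → ℂ) ⧸ LinearMap.range a) ≃ₗ[ℂ]
      ((ℕ → Fin N → ℂ) ⧸ LinearMap.range (Tmap A)) :=
    (Submodule.quotEquivOfEq _ _ hψker.symm).trans (ψ.quotKerEquivOfSurjective hψsurj)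
  have hFDker : FiniteDimensional ℂ (LinearMap.ker (Tmap A)) :=
    LinearEquiv.finiteDimensional e_ker.symm
  have hFDcok : FiniteDimensional ℂ ((ℕ → Fin N → ℂ) ⧸ LinearMap.range (Tmap A)) :=
    LinearEquiv.finiteDimensional e_cok
  refine ⟨hFDker, hFDcok, ?_⟩
  have h1 : Module.finrank ℂ (LinearMap.ker (Tmap A)) = Module.finrank ℂ (LinearMap.ker a) :=
    e_ker.finrank_eq
  have h2 : Module.finrank ℂ ((ℕ → Fin N → ℂ) ⧸ LinearMap.range (Tmap A)) =
      Module.finrank ℂ ((Fin r0 → Fin N → ℂ) ⧸ LinearMap.range a) :=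
    e_cok.symm.finrank_eq
  have hrank : Module.finrank ℂ (LinearMap.range a) + Module.finrank ℂ (LinearMap.ker a)
      = Module.finrank ℂ (Fin k0 → Fin N → ℂ) := LinearMap.finrank_range_add_finrank_ker a
  have hquot : Module.finrank ℂ ((Fin r0 → Fin N → ℂ) ⧸ LinearMap.range a)
      + Module.finrank ℂ (LinearMap.range a) = Module.finrank ℂ (Fin r0 → Fin N → ℂ) :=
    Submodule.finrank_quotient_add_finrank _
  have hF : Module.finrank ℂ (Fin k0 → Fin N → ℂ) = k0 * N := by
    rw [Module.finrank_pi_fintype]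
    simp [Module.finrank_fintype_fun_eq_card]
  have hG : Module.finrank ℂ (Fin r0 → Fin N → ℂ) = r0 * N := by
    rw [Module.finrank_pi_fintype]
    simp [Module.finrank_fintype_fun_eq_card]
  rw [h1, h2]
  rw [hF] at hrank
  rw [hG] at hquot
  have h3 : ((k0 : ℤ) - r0) * N = ((k0 * N : ℕ) : ℤ) - ((r0 * N : ℕ) : ℤ) := by
    push_cast; ring
  rw [h3]
  omega
end AuxIndex

/-- **Theorem 1(i).** If the indicial polynomial `l(k) = det L(k)` is not identically zero,
then `P : ℂ[[x]]^N → ℂ[[x]]^N` has finite-dimensional kernel and cokernel, and its index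
is `χ(P; ℂ[[x]]^N) = dim ker P - dim coker P = N·n`, where
`n = max_{0 ≤ i ≤ m} (i - ν(A_i))`. -/
theorem formal_index {N m : ℕ} (hN : 1 ≤ N)
    (A : Fin (m + 1) → Matrix (Fin N) (Fin N) (Polynomial ℂ))
    (hAm : (A (Fin.last m)).det ≠ 0)
    (n : ℤ)
    (hn_ub : ∀ i, A i ≠ 0 → (i : ℤ) - matNu (A i) ≤ n)
    (hn_mem : ∃ i, A i ≠ 0 ∧ (i : ℤ) - matNu (A i) = n)
    (hl : ∃ k : ℂ, (Lmat A n k).det ≠ 0) :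
    FiniteDimensional ℂ (LinearMap.ker (Pop A)) ∧
      FiniteDimensional ℂ ((Fin N → PowerSeries ℂ) ⧸ LinearMap.range (Pop A)) ∧
      (Module.finrank ℂ (LinearMap.ker (Pop A)) : ℤ) -
          Module.finrank ℂ ((Fin N → PowerSeries ℂ) ⧸ LinearMap.range (Pop A)) =
        N * n := by
  classical
  obtain ⟨k0, hk0m, hk0n, hdet⟩ := exists_k0 A n hl
  set r0 : ℕ := ((k0 : ℤ) - n).toNat with hr0def
  have hr0 : (r0 : ℤ) = (k0 : ℤ) - n := Int.toNat_of_nonneg (by omega)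
  obtain ⟨hFDk, hFDc, hidx⟩ := Tmap_index A n hn_ub k0 r0 hr0 hk0m hdet
  set E := coeffEquiv N with hEdef
  have hTmap : ∀ v, Tmap A v = E (Pop A (E.symm v)) := fun v => rfl
  have hkermap : (LinearMap.ker (Pop A)).map (E : (Fin N → PowerSeries ℂ) ≃ₗ[ℂ] _).toLinearMap
      = LinearMap.ker (Tmap A) := by
    ext v
    simp only [Submodule.mem_map, LinearMap.mem_ker, LinearEquiv.coe_coe]
    constructor
    · rintro ⟨u, hu, rfl⟩
      rw [hTmap, E.symm_apply_apply, hu, map_zero]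
    · intro hv
      refine ⟨E.symm v, ?_, E.apply_symm_apply v⟩
      have : E (Pop A (E.symm v)) = 0 := hv
      exact (LinearEquiv.map_eq_zero_iff E).mp this
  have hrangemap : (LinearMap.range (Pop A)).map
      (E : (Fin N → PowerSeries ℂ) ≃ₗ[ℂ] _).toLinearMap = LinearMap.range (Tmap A) := by
    ext w
    simp only [Submodule.mem_map, LinearMap.mem_range, LinearEquiv.coe_coe]
    constructor
    · rintro ⟨u, ⟨x, rfl⟩, rfl⟩
      exact ⟨E x, by rw [hTmap, E.symm_apply_apply]⟩
    · rintro ⟨v, rfl⟩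
      exact ⟨Pop A (E.symm v), ⟨E.symm v, rfl⟩, (hTmap v).symm⟩
  have e1 : LinearMap.ker (Pop A) ≃ₗ[ℂ] LinearMap.ker (Tmap A) :=
    (E.submoduleMap (LinearMap.ker (Pop A))).trans (LinearEquiv.ofEq _ _ hkermap)
  have e2 : ((Fin N → PowerSeries ℂ) ⧸ LinearMap.range (Pop A)) ≃ₗ[ℂ]
      ((ℕ → Fin N → ℂ) ⧸ LinearMap.range (Tmap A)) :=
    Submodule.Quotient.equiv _ _ E hrangemap
  refine ⟨LinearEquiv.finiteDimensional e1.symm, LinearEquiv.finiteDimensional e2.symm, ?_⟩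
  rw [e1.finrank_eq, e2.finrank_eq, hidx]
  have : (k0 : ℤ) - r0 = n := by omega
  rw [this]
  ring
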